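/- arXiv:2410.22569 — 4 statements merged into one kernel-verified Lean document; each statement's English description precedes it below -/
import Mathlib

section
/- Let μ be a finite regular Borel measure on ℝ with inf supp μ = 0. Then liminf_{t→∞} (∫ e^{-tx} μ(dx)) / (∫ e^{-2tx} μ(dx))^{1/2} > 0 if and only if μ({0}) > 0. -/
open MeasureTheory Filter

lemma aux_ae_nonneg (μ : Measure ℝ) (hsupp : μ (Set.Iio 0) = 0) : ∀ᵐ x ∂μ, 0 ≤ x := by
  rw [ae_iff]
  convert hsupp using 2
  ext x
  simp [not_le]

lemma aux_integrable (μ : Measure ℝ) [IsFiniteMeasure μ] (hsupp : μ (Set.Iio 0) = 0)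
    {t : ℝ} (ht : 0 ≤ t) : Integrable (fun x => Real.exp (-t * x)) μ := by
  refine (integrable_const (1:ℝ)).mono' ?_ ?_
  · exact (Real.continuous_exp.comp (continuous_const.mul continuous_id)).aestronglyMeasurable
  · filter_upwards [aux_ae_nonneg μ hsupp] with x hx
    rw [Real.norm_eq_abs, abs_of_pos (Real.exp_pos _)]
    have : -t * x ≤ 0 := by nlinarith
    calc Real.exp (-t * x) ≤ Real.exp 0 := Real.exp_le_exp.2 this
      _ = 1 := Real.exp_zero

lemma aux_lower (μ : Measure ℝ) [IsFiniteMeasure μ] (hsupp : μ (Set.Iio 0) = 0)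
    {t ε : ℝ} (ht : 0 ≤ t) (hε : 0 < ε) :
    Real.exp (-t * ε) * (μ (Set.Ico 0 ε)).toReal ≤ ∫ x, Real.exp (-t * x) ∂μ := by
  have hint := aux_integrable μ hsupp ht
  calc Real.exp (-t * ε) * (μ (Set.Ico 0 ε)).toReal
      ≤ ∫ x in Set.Ico 0 ε, Real.exp (-t * x) ∂μ := by
        rw [mul_comm, ← smul_eq_mul]
        apply setIntegral_ge_of_const_le measurableSet_Ico (measure_ne_top μ _)
        · intro x hx
          apply Real.exp_le_exp.2
          nlinarith [hx.1, hx.2]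
        · exact hint.integrableOn
    _ ≤ _ := setIntegral_le_integral hint (Eventually.of_forall fun x => (Real.exp_pos _).le)

lemma aux_tendsto (μ : Measure ℝ) [IsFiniteMeasure μ] (hsupp : μ (Set.Iio 0) = 0) :
    Tendsto (fun t : ℝ => ∫ x, Real.exp (-t * x) ∂μ) atTop (nhds (μ {0}).toReal) := by
  have h0 : (μ {0}).toReal = ∫ x, Set.indicator {0} (fun _ => (1:ℝ)) x ∂μ := by
    rw [integral_indicator (measurableSet_singleton 0)]
    simp
  rw [h0]
  apply tendsto_integral_filter_of_dominated_convergence (fun _ => (1:ℝ))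
  · exact Eventually.of_forall fun t =>
      (Real.continuous_exp.comp (continuous_const.mul continuous_id)).aestronglyMeasurable
  · filter_upwards [eventually_ge_atTop (0:ℝ)] with t ht
    filter_upwards [aux_ae_nonneg μ hsupp] with x hx
    rw [Real.norm_eq_abs, abs_of_pos (Real.exp_pos _)]
    have : -t * x ≤ 0 := by nlinarith
    calc Real.exp (-t * x) ≤ Real.exp 0 := Real.exp_le_exp.2 this
      _ = 1 := Real.exp_zero
  · exact integrable_const 1
  · filter_upwards [aux_ae_nonneg μ hsupp] with x hx
    rcases eq_or_lt_of_le hx with h | h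
    · simp only [← h, mul_zero, Real.exp_zero]
      have : Set.indicator {(0:ℝ)} (fun _ => (1:ℝ)) 0 = 1 := by simp
      rw [this]
      exact tendsto_const_nhds
    · have h1 : Set.indicator {(0:ℝ)} (fun _ => (1:ℝ)) x = 0 := by simp [h.ne']
      rw [h1]
      have : Tendsto (fun t : ℝ => Real.exp (-(t * x))) atTop (nhds 0) :=
        Real.tendsto_exp_atBot.comp (tendsto_neg_atBot_iff.2 (tendsto_id.atTop_mul_const h))
      simpa [neg_mul] using this

/-- Let `μ` be a finite regular Borel measure on `ℝ` with
`inf supp μ = 0` (i.e. `μ` gives no mass to `(-∞,0)` and every interval `[0,ε)`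
has positive mass).  Then
`liminf_{t→∞} (∫ e^{-tx} μ(dx)) / (∫ e^{-2tx} μ(dx))^{1/2} > 0` iff `μ({0}) > 0`. -/
theorem laplace_liminf_pos_iff_atom (μ : Measure ℝ) [IsFiniteMeasure μ] (hreg : μ.Regular)
    (hsupp_nonneg : μ (Set.Iio 0) = 0)
    (hsupp_inf : ∀ ε : ℝ, 0 < ε → 0 < μ (Set.Ico 0 ε)) :
    (0 < Filter.liminf (fun t : ℝ =>
        (∫ x, Real.exp (-t * x) ∂μ) / (∫ x, Real.exp (-2 * t * x) ∂μ) ^ ((1 : ℝ) / 2))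
      Filter.atTop) ↔ 0 < μ {0} := by
  set L : ℝ → ℝ := fun t => ∫ x, Real.exp (-t * x) ∂μ with hLdef
  have hL2 : ∀ t : ℝ, (∫ x, Real.exp (-2 * t * x) ∂μ) = L (2 * t) := by
    intro t
    simp only [hLdef]
    congr 1
    funext x
    ring_nf
  have hgoal : (fun t : ℝ =>
      (∫ x, Real.exp (-t * x) ∂μ) / (∫ x, Real.exp (-2 * t * x) ∂μ) ^ ((1 : ℝ) / 2))
      = fun t => L t / (L (2 * t)) ^ ((1 : ℝ) / 2) := by
    funext t
    rw [hL2]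
  rw [hgoal]
  have hLnonneg : ∀ t, 0 ≤ L t := fun t => integral_nonneg fun x => (Real.exp_pos _).le
  have htend : Tendsto L atTop (nhds (μ {0}).toReal) := aux_tendsto μ hsupp_nonneg
  constructor
  · intro hlim
    by_contra hμ0
    push_neg at hμ0
    have hμ0' : μ {0} = 0 := le_antisymm hμ0 zero_le
    have htend0 : Tendsto L atTop (nhds 0) := by
      simpa [hμ0'] using htend
    set l := liminf (fun t => L t / (L (2 * t)) ^ ((1 : ℝ) / 2)) atTop with hl
    set δ := l / 2 with hδ
    have hδpos : 0 < δ := by positivity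
    have hbdd : IsBoundedUnder (· ≥ ·) atTop (fun t => L t / (L (2 * t)) ^ ((1 : ℝ) / 2)) :=
      isBoundedUnder_of ⟨0, fun t => div_nonneg (hLnonneg t) (Real.rpow_nonneg (hLnonneg _) _)⟩
    have hev : ∀ᶠ t in atTop, δ < L t / (L (2 * t)) ^ ((1 : ℝ) / 2) :=
      eventually_lt_of_lt_liminf (by rw [hδ]; exact half_lt_self hlim) hbdd
    obtain ⟨T1, hT1⟩ := eventually_atTop.1 hev
    have hevsmall : ∀ᶠ t in atTop, L t < δ ^ 2 * (1 / 2) :=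
      htend0.eventually (gt_mem_nhds (by positivity))
    obtain ⟨T2, hT2⟩ := eventually_atTop.1 hevsmall
    set t0 := max (max T1 T2) 1 with ht0
    have ht0T1 : T1 ≤ t0 := le_trans (le_max_left _ _) (le_max_left _ _)
    have ht0T2 : T2 ≤ t0 := le_trans (le_max_right _ _) (le_max_left _ _)
    have ht0ge1 : (1 : ℝ) ≤ t0 := le_max_right _ _
    have key : ∀ s, T1 ≤ s → L (2 * s) ≤ L s ^ 2 / δ ^ 2 := by
      intro s hs
      have h1 : δ < L s / (L (2 * s)) ^ ((1 : ℝ) / 2) := hT1 s hs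
      have hD : 0 < (L (2 * s)) ^ ((1 : ℝ) / 2) := by
        rcases lt_or_eq_of_le (Real.rpow_nonneg (hLnonneg (2 * s)) ((1 : ℝ) / 2)) with h | h
        · exact h
        · rw [← h, div_zero] at h1; linarith
      have h2 : δ * (L (2 * s)) ^ ((1 : ℝ) / 2) < L s := (lt_div_iff₀ hD).1 h1
      have h3 : ((L (2 * s)) ^ ((1 : ℝ) / 2)) ^ 2 = L (2 * s) := by
        rw [← Real.sqrt_eq_rpow, Real.sq_sqrt (hLnonneg _)]
      rw [le_div_iff₀ (by positivity)]
      calc L (2 * s) * δ ^ 2 = (δ * (L (2 * s)) ^ ((1 : ℝ) / 2)) ^ 2 := by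
            rw [mul_pow, h3]; ring
        _ ≤ L s ^ 2 := by
            apply pow_le_pow_left₀ (by positivity) h2.le
    have hiter : ∀ n : ℕ, L (2 ^ n * t0) ≤ δ ^ 2 * (1 / 2) ^ (2 ^ n) := by
      intro n
      induction n with
      | zero =>
        simpa using (hT2 t0 ht0T2).le
      | succ n ih =>
        have hpow1 : (1 : ℝ) ≤ 2 ^ n := one_le_pow₀ (by norm_num : (1:ℝ) ≤ 2)
        have hs : T1 ≤ 2 ^ n * t0 := by nlinarith
        have hkey := key _ hs
        have h2s : 2 * (2 ^ n * t0) = 2 ^ (n + 1) * t0 := by ring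
        rw [h2s] at hkey
        calc L (2 ^ (n + 1) * t0) ≤ L (2 ^ n * t0) ^ 2 / δ ^ 2 := hkey
          _ ≤ (δ ^ 2 * (1 / 2) ^ (2 ^ n)) ^ 2 / δ ^ 2 := by
              gcongr
          _ = δ ^ 2 * ((1 / 2 : ℝ) ^ (2 ^ n)) ^ 2 := by
              rw [mul_pow]
              field_simp
          _ = δ ^ 2 * (1 / 2) ^ (2 ^ (n + 1)) := by
              rw [← pow_mul, ← pow_succ]
    set ε := Real.log 2 / (2 * t0) with hε
    have hεpos : 0 < ε := div_pos (Real.log_pos one_lt_two) (by linarith)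
    set m := (μ (Set.Ico 0 ε)).toReal with hm
    have hmpos : 0 < m := ENNReal.toReal_pos (hsupp_inf ε hεpos).ne' (measure_ne_top μ _)
    set r := Real.exp (Real.log 2 / 2) / 2 with hr
    have hr0 : 0 ≤ r := by positivity
    have hr1 : r < 1 := by
      rw [hr, div_lt_one (by norm_num : (0:ℝ) < 2)]
      calc Real.exp (Real.log 2 / 2) < Real.exp (Real.log 2) :=
            Real.exp_lt_exp.2 (half_lt_self (Real.log_pos one_lt_two))
        _ = 2 := Real.exp_log (by norm_num)
    have hbound : ∀ n : ℕ, m ≤ δ ^ 2 * r ^ (2 ^ n) := by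
      intro n
      have hlow := aux_lower μ hsupp_nonneg
        (show (0:ℝ) ≤ 2 ^ n * t0 by positivity) hεpos
      have h1 : Real.exp (-(2 ^ n * t0) * ε) * m ≤ δ ^ 2 * (1 / 2) ^ (2 ^ n) :=
        le_trans hlow (hiter n)
      have hc : (2 ^ n * t0) * ε = (2 ^ n : ℕ) * (Real.log 2 / 2) := by
        rw [hε]
        push_cast
        field_simp
      have hexp : Real.exp ((2 ^ n * t0) * ε) = Real.exp (Real.log 2 / 2) ^ (2 ^ n) := by
        rw [hc, Real.exp_nat_mul]
      have hepos : 0 < Real.exp (-(2 ^ n * t0) * ε) := Real.exp_pos _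
      have h2 : m ≤ δ ^ 2 * (1 / 2) ^ (2 ^ n) * Real.exp ((2 ^ n * t0) * ε) := by
        have hmul := mul_le_mul_of_nonneg_right h1 (Real.exp_pos (2 ^ n * t0 * ε)).le
        have hid : Real.exp (-(2 ^ n * t0) * ε) * m * Real.exp (2 ^ n * t0 * ε) = m := by
          rw [neg_mul, Real.exp_neg]
          field_simp
        rwa [hid] at hmul
      calc m ≤ δ ^ 2 * (1 / 2) ^ (2 ^ n) * Real.exp ((2 ^ n * t0) * ε) := h2
        _ = δ ^ 2 * r ^ (2 ^ n) := by
            rw [hexp, hr, div_pow]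
            field_simp
            rw [← mul_pow]; ring
    have htends : Tendsto (fun n : ℕ => δ ^ 2 * r ^ (2 ^ n)) atTop (nhds 0) := by
      have h1 : Tendsto (fun k : ℕ => r ^ k) atTop (nhds 0) :=
        tendsto_pow_atTop_nhds_zero_of_lt_one hr0 hr1
      have h2 : Tendsto (fun n : ℕ => 2 ^ n) atTop atTop :=
        tendsto_pow_atTop_atTop_of_one_lt one_lt_two
      simpa using (h1.comp h2).const_mul (δ ^ 2)
    have : m ≤ 0 := ge_of_tendsto' htends hbound
    linarith
  · intro hμ0
    have hc : 0 < (μ {0}).toReal := ENNReal.toReal_pos hμ0.ne' (measure_ne_top μ _)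
    set c := (μ {0}).toReal with hcdef
    have htend2 : Tendsto (fun t => L (2 * t)) atTop (nhds c) :=
      htend.comp (tendsto_id.const_mul_atTop two_pos)
    have hcpow : 0 < c ^ ((1 : ℝ) / 2) := Real.rpow_pos_of_pos hc _
    have hratio : Tendsto (fun t => L t / (L (2 * t)) ^ ((1 : ℝ) / 2)) atTop
        (nhds (c / c ^ ((1 : ℝ) / 2))) :=
      htend.div (htend2.rpow_const (Or.inr (by norm_num))) hcpow.ne'
    rw [hratio.liminf_eq]
    exact div_pos hc hcpow
end

section
/- Let μ be a finite regular Borel measure on ℝ with inf supp μ = 0 and μ({0}) = 0. Then for every n, liminf over large t of (∫_{(-1/n,1/n)} e^{-tx} μ(dx))/(∫ e^{-2tx} μ(dx))^{1/2} ≤ μ((-1/n,1/n))^{1/2}, and consequently liminf_{t→∞} (∫ e^{-tx} μ(dx))/(∫ e^{-2tx} μ(dx))^{1/2} = 0. -/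
open MeasureTheory Filter Topology

section LapAux
variable {μ : MeasureTheory.Measure ℝ} [IsFiniteMeasure μ]

omit [IsFiniteMeasure μ] in
lemma lap_ae_nonneg (h : μ (Set.Iio 0) = 0) : ∀ᵐ x ∂μ, 0 ≤ x := by
  rw [ae_iff]
  convert h using 2
  ext x; simp [not_le]

lemma lap_integrable (h0 : ∀ᵐ x ∂μ, 0 ≤ x) {c : ℝ} (hc : c ≤ 0) :
    Integrable (fun x => Real.exp (c * x)) μ := by
  refine Integrable.mono' (integrable_const 1) ?_ ?_
  · exact (Real.continuous_exp.comp (continuous_const.mul continuous_id)).aestronglyMeasurable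
  · filter_upwards [h0] with x hx
    rw [Real.norm_of_nonneg (Real.exp_nonneg _)]
    exact Real.exp_le_one_iff.mpr (mul_nonpos_of_nonpos_of_nonneg hc hx)

lemma lap_memL2 (h0 : ∀ᵐ x ∂μ, 0 ≤ x) {c : ℝ} (hc : c ≤ 0) (s : Set ℝ) :
    MemLp (fun x => Real.exp (c * x)) (ENNReal.ofReal 2) (μ.restrict s) := by
  refine MemLp.of_bound
    ((Real.continuous_exp.comp (continuous_const.mul continuous_id)).aestronglyMeasurable) 1 ?_
  filter_upwards [ae_restrict_of_ae h0] with x hx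
  rw [Real.norm_of_nonneg (Real.exp_nonneg _)]
  exact Real.exp_le_one_iff.mpr (mul_nonpos_of_nonpos_of_nonneg hc hx)

/-- Cauchy–Schwarz on a set. -/
lemma lap_cs (h0 : ∀ᵐ x ∂μ, 0 ≤ x) {t : ℝ} (ht : 0 ≤ t) (s : Set ℝ) :
    ∫ x in s, Real.exp (-t * x) ∂μ ≤
      (∫ x in s, Real.exp (-2 * t * x) ∂μ) ^ ((1 : ℝ) / 2) * (μ s).toReal ^ ((1 : ℝ) / 2) := by
  have hpq : Real.HolderConjugate 2 2 := Real.HolderConjugate.two_two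
  have h1 : ∫ x in s, Real.exp (-t * x) ∂μ
      = ∫ x in s, Real.exp (-t * x) * (1 : ℝ) ∂μ := by simp
  have hCS := integral_mul_le_Lp_mul_Lq_of_nonneg (μ := μ.restrict s) hpq
    (f := fun x => Real.exp (-t * x)) (g := fun _ => (1 : ℝ))
    (Filter.Eventually.of_forall fun x => Real.exp_nonneg _)
    (Filter.Eventually.of_forall fun _ => zero_le_one)
    (lap_memL2 h0 (by linarith) s)
    (memLp_const 1)
  rw [h1]
  refine hCS.trans_eq ?_
  congr 1
  · congr 1
    refine integral_congr_ae (Filter.Eventually.of_forall fun x => ?_)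
    show Real.exp (-t * x) ^ (2:ℝ) = Real.exp (-2 * t * x)
    rw [show (2:ℝ) = ((2:ℕ):ℝ) by norm_num, Real.rpow_natCast, sq, ← Real.exp_add]
    ring_nf
  · simp [Measure.real]

/-- lower bound for the denominator integral. -/
lemma lap_denom_lb (h0 : ∀ᵐ x ∂μ, 0 ≤ x) {t ε : ℝ} (ht : 0 ≤ t) (hε : 0 < ε) :
    Real.exp (-2 * t * ε) * (μ (Set.Ico 0 ε)).toReal ≤ ∫ x, Real.exp (-2 * t * x) ∂μ := by
  have hint : Integrable (fun x => Real.exp (-2 * t * x)) μ :=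
    lap_integrable h0 (by nlinarith : -2 * t ≤ 0)
  calc Real.exp (-2 * t * ε) * (μ (Set.Ico 0 ε)).toReal
      = ∫ _x in Set.Ico (0:ℝ) ε, Real.exp (-2 * t * ε) ∂μ := by
        rw [setIntegral_const]; simp [mul_comm, Measure.real]
    _ ≤ ∫ x in Set.Ico (0:ℝ) ε, Real.exp (-2 * t * x) ∂μ := by
        refine setIntegral_mono_on (integrableOn_const (measure_ne_top _ _))
          hint.integrableOn measurableSet_Ico fun x hx => ?_
        exact Real.exp_le_exp.mpr (by nlinarith [hx.1, hx.2])
    _ ≤ ∫ x, Real.exp (-2 * t * x) ∂μ :=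
        setIntegral_le_integral hint (Filter.Eventually.of_forall fun x => Real.exp_nonneg _)

end LapAux

/-- If `μ` is a finite regular Borel measure on `ℝ` with
`inf supp μ = 0` and `μ({0}) = 0`, then for every `n ≥ 1` the liminf (as `t → ∞`) of
`(∫_{(-1/n,1/n)} e^{-tx} μ(dx)) / (∫ e^{-2tx} μ(dx))^{1/2}` is at most
`μ((-1/n,1/n))^{1/2}`, and consequently the liminf of the full quotient is `0`. -/
theorem laplace_liminf_zero_of_no_atom (μ : Measure ℝ) [IsFiniteMeasure μ] (hreg : μ.Regular)
    (hsupp_nonneg : μ (Set.Iio 0) = 0)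
    (hsupp_inf : ∀ ε : ℝ, 0 < ε → 0 < μ (Set.Ico 0 ε))
    (hatom : μ {0} = 0) :
    (∀ n : ℕ, 1 ≤ n →
      Filter.liminf (fun t : ℝ =>
          (∫ x in Set.Ioo (-(1 / (n : ℝ))) (1 / (n : ℝ)), Real.exp (-t * x) ∂μ) /
            (∫ x, Real.exp (-2 * t * x) ∂μ) ^ ((1 : ℝ) / 2)) Filter.atTop
        ≤ (μ (Set.Ioo (-(1 / (n : ℝ))) (1 / (n : ℝ)))).toReal ^ ((1 : ℝ) / 2)) ∧
    Filter.liminf (fun t : ℝ =>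
        (∫ x, Real.exp (-t * x) ∂μ) / (∫ x, Real.exp (-2 * t * x) ∂μ) ^ ((1 : ℝ) / 2))
      Filter.atTop = 0 := by
  have h0 : ∀ᵐ x ∂μ, 0 ≤ x := lap_ae_nonneg hsupp_nonneg
  set D : ℝ → ℝ := fun t => ∫ x, Real.exp (-2 * t * x) ∂μ with hD
  have hDnonneg : ∀ t, 0 ≤ D t := fun t => integral_nonneg fun x => Real.exp_nonneg _
  have hDpos : ∀ t : ℝ, 0 ≤ t → 0 < D t := by
    intro t ht
    have h1 := lap_denom_lb h0 ht (one_pos)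
    have h2 : 0 < (μ (Set.Ico (0:ℝ) 1)).toReal :=
      ENNReal.toReal_pos (hsupp_inf 1 one_pos).ne' (measure_ne_top _ _)
    exact lt_of_lt_of_le (by positivity) h1
  have hPpos : ∀ t : ℝ, 0 ≤ t → 0 < (D t) ^ ((1:ℝ)/2) := fun t ht =>
    Real.rpow_pos_of_pos (hDpos t ht) _
  -- pointwise bound for the restricted quotient, any measurable set s
  have hpoint : ∀ (s : Set ℝ), ∀ t : ℝ, 0 ≤ t →
      (∫ x in s, Real.exp (-t * x) ∂μ) / (D t) ^ ((1:ℝ)/2)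
        ≤ (μ s).toReal ^ ((1:ℝ)/2) := by
    intro s t ht
    rw [div_le_iff₀ (hPpos t ht)]
    refine (lap_cs h0 ht s).trans ?_
    rw [mul_comm]
    refine mul_le_mul_of_nonneg_left ?_ (Real.rpow_nonneg ENNReal.toReal_nonneg _)
    refine Real.rpow_le_rpow (integral_nonneg fun x => Real.exp_nonneg _) ?_ (by norm_num)
    exact setIntegral_le_integral (lap_integrable h0 (by nlinarith : -2 * t ≤ 0))
      (Filter.Eventually.of_forall fun x => Real.exp_nonneg _)
  have hFnonneg : ∀ (s : Set ℝ) (t : ℝ),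
      0 ≤ (∫ x in s, Real.exp (-t * x) ∂μ) / (D t) ^ ((1:ℝ)/2) := fun s t =>
    div_nonneg (integral_nonneg fun x => Real.exp_nonneg _)
      (Real.rpow_nonneg (hDnonneg t) _)
  constructor
  · intro n hn
    refine liminf_le_of_frequently_le ?_ (isBoundedUnder_of ⟨0, fun t => hFnonneg _ t⟩)
    exact ((eventually_ge_atTop (0:ℝ)).mono fun t ht => hpoint _ t ht).frequently
  · -- full quotient
    set F : ℝ → ℝ := fun t => (∫ x, Real.exp (-t * x) ∂μ) / (D t) ^ ((1:ℝ)/2) with hF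
    have hFnn : ∀ t, 0 ≤ F t := fun t =>
      div_nonneg (integral_nonneg fun x => Real.exp_nonneg _)
        (Real.rpow_nonneg (hDnonneg t) _)
    have hFub : ∀ᶠ t in (atTop : Filter ℝ), F t ≤ (μ Set.univ).toReal ^ ((1:ℝ)/2) := by
      filter_upwards [eventually_ge_atTop (0:ℝ)] with t ht
      have := hpoint Set.univ t ht
      rwa [Measure.restrict_univ] at this
    have hbdd : IsBoundedUnder (· ≥ ·) (atTop : Filter ℝ) F :=
      isBoundedUnder_of ⟨0, hFnn⟩
    have hcob : IsCoboundedUnder (· ≥ ·) (atTop : Filter ℝ) F :=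
      (isBoundedUnder_of_eventually_le hFub).isCoboundedUnder_ge
    refine le_antisymm ?_ (le_liminf_of_le hcob (Filter.Eventually.of_forall hFnn))
    have key : ∀ ε : ℝ, 0 < ε → liminf F atTop ≤ ε := by
      intro ε hε
      -- choose n with √(μ(I_n)) < ε/2
      obtain ⟨n, hn1, hsmall⟩ : ∃ n : ℕ, 1 ≤ n ∧
          (μ (Set.Ioo (-(1 / (n : ℝ))) (1 / (n : ℝ)))).toReal ^ ((1:ℝ)/2) < ε / 2 := by
        set δ : ℝ := (ε / 2) ^ (2:ℕ) with hδdef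
        have hδpos : 0 < δ := by positivity
        have hanti : Antitone (fun m : ℕ => Set.Ico (0:ℝ) (1 / ((m:ℝ) + 1))) := by
          intro m k hmk
          refine Set.Ico_subset_Ico le_rfl ?_
          have : ((m:ℝ) + 1) ≤ ((k:ℝ) + 1) := by exact_mod_cast Nat.succ_le_succ hmk
          exact one_div_le_one_div_of_le (by positivity) this
        have hiInter : (⋂ m : ℕ, Set.Ico (0:ℝ) (1 / ((m:ℝ) + 1))) = {0} := by
          ext x
          simp only [Set.mem_iInter, Set.mem_Ico, Set.mem_singleton_iff]
          constructor
          · intro h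
            refine le_antisymm ?_ (h 0).1
            by_contra hx
            push_neg at hx
            obtain ⟨m, hm⟩ := exists_nat_one_div_lt hx
            exact absurd (h m).2 (not_lt.mpr hm.le)
          · rintro rfl
            exact fun m => ⟨le_rfl, by positivity⟩
        have hto : Tendsto (fun m : ℕ => μ (Set.Ico (0:ℝ) (1 / ((m:ℝ) + 1)))) atTop (𝓝 0) := by
          have h := tendsto_measure_iInter_atTop (μ := μ)
            (s := fun m : ℕ => Set.Ico (0:ℝ) (1 / ((m:ℝ) + 1)))
            (fun m => measurableSet_Ico.nullMeasurableSet) hanti ⟨0, measure_ne_top _ _⟩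
          rw [hiInter, hatom] at h
          exact h
        have hofpos : (0 : ENNReal) < ENNReal.ofReal δ := ENNReal.ofReal_pos.mpr hδpos
        have hev := hto.eventually (gt_mem_nhds hofpos)
        obtain ⟨m, hm⟩ := hev.exists
        refine ⟨m + 1, Nat.le_add_left 1 m, ?_⟩
        have hcast : (1 : ℝ) / ((m + 1 : ℕ) : ℝ) = 1 / ((m:ℝ) + 1) := by push_cast; ring
        have hsub : μ (Set.Ioo (-(1 / ((m + 1 : ℕ) : ℝ))) (1 / ((m + 1 : ℕ) : ℝ)))
            ≤ μ (Set.Ico (0:ℝ) (1 / ((m:ℝ) + 1))) := by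
          rw [hcast]
          calc μ (Set.Ioo (-(1 / ((m:ℝ) + 1))) (1 / ((m:ℝ) + 1)))
              ≤ μ (Set.Iio 0 ∪ Set.Ico (0:ℝ) (1 / ((m:ℝ) + 1))) := by
                refine measure_mono fun x hx => ?_
                rcases lt_or_ge x 0 with h | h
                · exact Or.inl h
                · exact Or.inr ⟨h, hx.2⟩
            _ ≤ μ (Set.Iio 0) + μ (Set.Ico (0:ℝ) (1 / ((m:ℝ) + 1))) := measure_union_le _ _
            _ = μ (Set.Ico (0:ℝ) (1 / ((m:ℝ) + 1))) := by rw [hsupp_nonneg, zero_add]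
        have hlt : (μ (Set.Ioo (-(1 / ((m + 1 : ℕ) : ℝ))) (1 / ((m + 1 : ℕ) : ℝ)))).toReal < δ := by
          have h1 : μ (Set.Ioo (-(1 / ((m + 1 : ℕ) : ℝ))) (1 / ((m + 1 : ℕ) : ℝ)))
              < ENNReal.ofReal δ := lt_of_le_of_lt hsub hm
          calc (μ (Set.Ioo (-(1 / ((m + 1 : ℕ) : ℝ))) (1 / ((m + 1 : ℕ) : ℝ)))).toReal
              < (ENNReal.ofReal δ).toReal :=
                ENNReal.toReal_strict_mono ENNReal.ofReal_ne_top h1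
            _ = δ := ENNReal.toReal_ofReal hδpos.le
        calc (μ (Set.Ioo (-(1 / ((m + 1 : ℕ) : ℝ))) (1 / ((m + 1 : ℕ) : ℝ)))).toReal ^ ((1:ℝ)/2)
            < δ ^ ((1:ℝ)/2) :=
              Real.rpow_lt_rpow ENNReal.toReal_nonneg hlt (by norm_num)
          _ = ε / 2 := by
              rw [hδdef, ← Real.rpow_natCast (ε/2) 2, ← Real.rpow_mul (by positivity)]
              norm_num
      set a : ℝ := 1 / (n : ℝ) with ha
      have han : (0:ℝ) < a := by
        have : (0:ℝ) < (n:ℝ) := by exact_mod_cast hn1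
        positivity
      set I : Set ℝ := Set.Ioo (-a) a with hI
      set c : ℝ := (μ (Set.Ico 0 (a/2))).toReal with hc
      have hcpos : 0 < c :=
        ENNReal.toReal_pos (hsupp_inf _ (by linarith)).ne' (measure_ne_top _ _)
      set M : ℝ := (μ Set.univ).toReal with hM
      -- tail bound
      have htail : ∀ t : ℝ, 0 ≤ t →
          (∫ x in Iᶜ, Real.exp (-t * x) ∂μ) / (D t) ^ ((1:ℝ)/2)
            ≤ M / c ^ ((1:ℝ)/2) * Real.exp (-(a/2) * t) := by
        intro t ht
        have hins : Integrable (fun x => Real.exp (-t * x)) μ :=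
          lap_integrable h0 (by linarith : -t ≤ 0)
        have hIc : (Iᶜ : Set ℝ) =ᵐ[μ] (Iᶜ ∩ Set.Ici 0 : Set ℝ) := by
          refine (ae_eq_set.mpr ⟨?_, ?_⟩)
          · refine measure_mono_null (fun x hx => ?_) hsupp_nonneg
            rcases hx with ⟨hx1, hx2⟩
            simp only [Set.mem_inter_iff, not_and, Set.mem_Ici, not_le] at hx2
            exact hx2 hx1
          · refine measure_mono_null (fun x hx => ?_) hsupp_nonneg
            exact absurd hx.1.1 hx.2
        have hB : (∫ x in Iᶜ, Real.exp (-t * x) ∂μ) ≤ Real.exp (-t * a) * M := by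
          rw [setIntegral_congr_set hIc]
          calc (∫ x in Iᶜ ∩ Set.Ici 0, Real.exp (-t * x) ∂μ)
              ≤ ∫ _x in Iᶜ ∩ Set.Ici 0, Real.exp (-t * a) ∂μ := by
                refine setIntegral_mono_on hins.integrableOn
                  (integrableOn_const (measure_ne_top _ _))
                  (measurableSet_Ioo.compl.inter measurableSet_Ici) fun x hx => ?_
                have hxa : a ≤ x := by
                  rcases hx with ⟨hx1, hx2⟩
                  simp only [hI, Set.mem_compl_iff, Set.mem_Ioo, not_and, not_lt] at hx1
                  by_contra hcon
                  push_neg at hcon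
                  exact absurd (hx1 (by linarith [Set.mem_Ici.mp hx2])) (by linarith)
                exact Real.exp_le_exp.mpr (by nlinarith)
            _ = (μ (Iᶜ ∩ Set.Ici 0)).toReal * Real.exp (-t * a) := by
                rw [setIntegral_const]; simp [Measure.real]
            _ ≤ Real.exp (-t * a) * M := by
                rw [mul_comm]
                refine mul_le_mul_of_nonneg_left ?_ (Real.exp_nonneg _)
                exact ENNReal.toReal_mono (measure_ne_top _ _) (measure_mono (Set.subset_univ _))
        have hP : Real.exp (-(a/2) * t) * c ^ ((1:ℝ)/2) ≤ (D t) ^ ((1:ℝ)/2) := by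
          have hlb := lap_denom_lb (μ := μ) h0 ht (by linarith : (0:ℝ) < a/2)
          have h1 : Real.exp (-(a/2) * t) * c ^ ((1:ℝ)/2)
              = (Real.exp (-2 * t * (a/2)) * c) ^ ((1:ℝ)/2) := by
            rw [Real.mul_rpow (Real.exp_nonneg _) (le_of_lt hcpos)]
            congr 1
            rw [Real.rpow_def_of_pos (Real.exp_pos _), Real.log_exp]
            congr 1
            ring
          rw [h1]
          exact Real.rpow_le_rpow (by positivity) hlb (by norm_num)
        calc (∫ x in Iᶜ, Real.exp (-t * x) ∂μ) / (D t) ^ ((1:ℝ)/2)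
            ≤ (Real.exp (-t * a) * M) / (Real.exp (-(a/2) * t) * c ^ ((1:ℝ)/2)) := by
              refine div_le_div₀ (by positivity) hB (by positivity) hP
          _ = M / c ^ ((1:ℝ)/2) * Real.exp (-(a/2) * t) := by
              rw [show Real.exp (-t * a) = Real.exp (-(a/2) * t) * Real.exp (-(a/2) * t) by
                rw [← Real.exp_add]; congr 1; ring]
              have hne : Real.exp (-(a/2) * t) ≠ 0 := (Real.exp_pos _).ne'
              field_simp
      -- the decaying term is eventually ≤ ε/2
      have hdecay : Tendsto (fun t : ℝ => M / c ^ ((1:ℝ)/2) * Real.exp (-(a/2) * t))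
          atTop (𝓝 0) := by
        rw [show (0:ℝ) = M / c ^ ((1:ℝ)/2) * 0 by ring]
        refine Tendsto.const_mul _ ?_
        refine Real.tendsto_exp_atBot.comp ?_
        exact Tendsto.const_mul_atTop_of_neg (by linarith : -(a/2) < 0) tendsto_id
      have hev : ∀ᶠ t in (atTop : Filter ℝ),
          M / c ^ ((1:ℝ)/2) * Real.exp (-(a/2) * t) ≤ ε / 2 :=
        hdecay.eventually (eventually_le_nhds (by linarith))
      refine liminf_le_of_frequently_le ?_ hbdd
      refine ((hev.and (eventually_ge_atTop (0:ℝ))).mono fun t h => ?_).frequently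
      obtain ⟨hev_t, ht⟩ := h
      have hsplit : F t = (∫ x in I, Real.exp (-t * x) ∂μ) / (D t) ^ ((1:ℝ)/2)
          + (∫ x in Iᶜ, Real.exp (-t * x) ∂μ) / (D t) ^ ((1:ℝ)/2) := by
        rw [← add_div, integral_add_compl measurableSet_Ioo
          (lap_integrable h0 (by linarith : -t ≤ 0))]
      rw [hsplit]
      have h1 := hpoint I t ht
      have h2 := (htail t ht).trans hev_t
      calc (∫ x in I, Real.exp (-t * x) ∂μ) / (D t) ^ ((1:ℝ)/2)
          + (∫ x in Iᶜ, Real.exp (-t * x) ∂μ) / (D t) ^ ((1:ℝ)/2)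
          ≤ (μ I).toReal ^ ((1:ℝ)/2) + ε / 2 := add_le_add h1 h2
        _ ≤ ε := by
            have : (μ I).toReal ^ ((1:ℝ)/2) < ε / 2 := hsmall
            linarith
    by_contra hcon
    push_neg at hcon
    have h2 := key (liminf F atTop / 2) (by linarith)
    linarith
end

section
/- Let X be a standard d-dimensional Gaussian random vector, X ~ N(0, I_{d×d}). Then for all σ ∈ [1,2], every R > 0, and every z ∈ ℝ^d, P(‖X + z‖ ≤ R) ≤ 2^{d/2} · P(‖√σ · X + z‖ ≤ R). -/
open MeasureTheory ProbabilityTheory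
open scoped ENNReal NNReal

lemma aux_pi_mono {ι : Type*} [Fintype ι] {α : ι → Type*} [∀ i, MeasurableSpace (α i)]
    {μ ν : ∀ i, Measure (α i)} (h : ∀ i, μ i ≤ ν i) : Measure.pi μ ≤ Measure.pi ν := by
  refine Measure.le_iff.2 fun s hs => ?_
  rw [Measure.pi_def, Measure.pi_def, toMeasure_apply _ _ hs, toMeasure_apply _ _ hs]
  have hle : (OuterMeasure.pi fun i => (μ i).toOuterMeasure)
      ≤ OuterMeasure.pi fun i => (ν i).toOuterMeasure := by
    rw [OuterMeasure.le_pi]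
    intro t _
    refine (OuterMeasure.pi_pi_le _ t).trans ?_
    exact Finset.prod_le_prod (fun i _ => zero_le) (fun i _ => h i _)
  exact hle s

lemma aux_pi_smul {ι : Type*} [Fintype ι] {α : ι → Type*} [∀ i, MeasurableSpace (α i)]
    (c : ℝ≥0∞) (hc : c ≠ ⊤) (μ : ∀ i, Measure (α i)) [∀ i, IsProbabilityMeasure (μ i)] :
    Measure.pi (fun i => c • μ i) = (c ^ (Fintype.card ι)) • Measure.pi μ := by
  haveI : ∀ i, SigmaFinite (c • μ i) := by
    intro i
    haveI : IsFiniteMeasure (c • μ i) := by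
      constructor
      rw [Measure.smul_apply, smul_eq_mul, measure_univ, mul_one]
      exact hc.lt_top
    infer_instance
  refine Measure.pi_eq (μ := fun i => c • μ i) fun s hs => ?_
  rw [Measure.smul_apply, Measure.pi_pi, smul_eq_mul]
  simp_rw [Measure.smul_apply, smul_eq_mul]
  rw [Finset.prod_mul_distrib, Finset.prod_const, Finset.card_univ]

lemma aux_gauss_le {σ' : ℝ≥0} (h1 : 1 ≤ σ') (h2 : σ' ≤ 2) :
    gaussianReal 0 1 ≤ (ENNReal.ofReal (Real.sqrt 2)) • gaussianReal 0 σ' := by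
  have hσ0 : σ' ≠ 0 := by positivity
  have hσpos : (0:ℝ) < (σ' : ℝ) := by exact_mod_cast lt_of_lt_of_le one_pos h1
  have h1' : (1:ℝ) ≤ (σ' : ℝ) := by exact_mod_cast h1
  have h2' : (σ' : ℝ) ≤ 2 := by exact_mod_cast h2
  rw [gaussianReal_of_var_ne_zero _ one_ne_zero, gaussianReal_of_var_ne_zero _ hσ0]
  have key : ∀ x : ℝ, gaussianPDFReal 0 1 x ≤ Real.sqrt 2 * gaussianPDFReal 0 σ' x := by
    intro x
    rw [gaussianPDFReal, gaussianPDFReal]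
    have hexp : Real.exp (-(x - 0) ^ 2 / (2 * ((1:ℝ≥0) : ℝ)))
        ≤ Real.exp (-(x - 0) ^ 2 / (2 * (σ' : ℝ))) := by
      apply Real.exp_le_exp.2
      rw [neg_div, neg_div, neg_le_neg_iff]
      push_cast
      rw [mul_one]
      exact div_le_div_of_nonneg_left (sq_nonneg _) two_pos (by linarith)
    have hcoef : (Real.sqrt (2 * Real.pi * ((1:ℝ≥0) : ℝ)))⁻¹
        ≤ Real.sqrt 2 * (Real.sqrt (2 * Real.pi * (σ' : ℝ)))⁻¹ := by
      push_cast
      rw [mul_one]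
      have hs2 : (0:ℝ) < Real.sqrt 2 := Real.sqrt_pos.2 two_pos
      have hsp : (0:ℝ) < Real.sqrt (2 * Real.pi) :=
        Real.sqrt_pos.2 (by positivity)
      have hlt : Real.sqrt (2 * Real.pi * (σ' : ℝ)) ≤ Real.sqrt (2 * Real.pi) * Real.sqrt 2 := by
        rw [← Real.sqrt_mul (by positivity)]
        exact Real.sqrt_le_sqrt (by nlinarith [Real.pi_pos])
      have hpos : (0:ℝ) < Real.sqrt (2 * Real.pi * (σ' : ℝ)) :=
        Real.sqrt_pos.2 (by positivity)
      have h3 : (Real.sqrt (2 * Real.pi) * Real.sqrt 2)⁻¹ ≤ (Real.sqrt (2 * Real.pi * (σ' : ℝ)))⁻¹ :=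
        inv_anti₀ hpos hlt
      calc (Real.sqrt (2 * Real.pi))⁻¹
          = Real.sqrt 2 * (Real.sqrt (2 * Real.pi) * Real.sqrt 2)⁻¹ := by
            rw [mul_inv]; field_simp
        _ ≤ Real.sqrt 2 * (Real.sqrt (2 * Real.pi * (σ' : ℝ)))⁻¹ :=
            mul_le_mul_of_nonneg_left h3 (le_of_lt hs2)
    calc (Real.sqrt (2 * Real.pi * ((1:ℝ≥0):ℝ)))⁻¹ * Real.exp (-(x - 0) ^ 2 / (2 * ((1:ℝ≥0):ℝ)))
        ≤ (Real.sqrt 2 * (Real.sqrt (2 * Real.pi * (σ':ℝ)))⁻¹)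
            * Real.exp (-(x - 0) ^ 2 / (2 * (σ':ℝ))) :=
          mul_le_mul hcoef hexp (Real.exp_nonneg _) (by positivity)
      _ = Real.sqrt 2 * ((Real.sqrt (2 * Real.pi * (σ':ℝ)))⁻¹
            * Real.exp (-(x - 0) ^ 2 / (2 * (σ':ℝ)))) := by ring
  have hpdf : ∀ x, gaussianPDF 0 1 x
      ≤ (ENNReal.ofReal (Real.sqrt 2) • fun y => gaussianPDF 0 σ' y) x := by
    intro x
    simp only [Pi.smul_apply, smul_eq_mul, gaussianPDF]
    rw [← ENNReal.ofReal_mul (Real.sqrt_nonneg 2)]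
    exact ENNReal.ofReal_le_ofReal (key x)
  calc volume.withDensity (gaussianPDF 0 1)
      ≤ volume.withDensity ((ENNReal.ofReal (Real.sqrt 2)) • fun y => gaussianPDF 0 σ' y) :=
        withDensity_mono (Filter.Eventually.of_forall hpdf)
    _ = (ENNReal.ofReal (Real.sqrt 2)) • volume.withDensity (gaussianPDF 0 σ') :=
        withDensity_smul _ (measurable_gaussianPDF 0 σ')

/-- Let `X ~ N(0, I_{d×d})` be a standard `d`-dimensional Gaussian
(realized as the product of `d` standard Gaussians on `Fin d → ℝ`).  For all
`σ ∈ [1,2]`, `R > 0` and `z ∈ ℝ^d`,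
`P(‖X + z‖ ≤ R) ≤ 2^{d/2} · P(‖√σ·X + z‖ ≤ R)`, with the Euclidean norm. -/
theorem gaussian_shift_scale_bound (d : ℕ) (σ : ℝ) (hσ : σ ∈ Set.Icc (1 : ℝ) 2)
    (R : ℝ) (hR : 0 < R) (z : Fin d → ℝ) :
    (Measure.pi fun _ : Fin d => gaussianReal 0 1)
        {x : Fin d → ℝ | Real.sqrt (∑ i, (x i + z i) ^ 2) ≤ R}
      ≤ ENNReal.ofReal ((2 : ℝ) ^ ((d : ℝ) / 2)) *
        (Measure.pi fun _ : Fin d => gaussianReal 0 1)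
          {x : Fin d → ℝ | Real.sqrt (∑ i, (Real.sqrt σ * x i + z i) ^ 2) ≤ R} := by
  obtain ⟨hσ1, hσ2⟩ := hσ
  have hσ0 : (0:ℝ) ≤ σ := le_trans zero_le_one hσ1
  set σ' : ℝ≥0 := ⟨σ, hσ0⟩ with hσ'def
  have hσ'1 : 1 ≤ σ' := by exact_mod_cast hσ1
  have hσ'2 : σ' ≤ 2 := by exact_mod_cast hσ2
  -- the target set
  set S : Set (Fin d → ℝ) := {x : Fin d → ℝ | Real.sqrt (∑ i, (x i + z i) ^ 2) ≤ R} with hSdef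
  have hSm : MeasurableSet S := by
    apply measurableSet_le _ measurable_const
    apply Measurable.sqrt
    exact Finset.measurable_sum _ fun i _ =>
      ((measurable_pi_apply i).add_const _).pow_const 2
  -- the scaling map is measure preserving
  have hmap : (gaussianReal 0 1).map (fun x => Real.sqrt σ * x) = gaussianReal 0 σ' := by
    rw [gaussianReal_map_const_mul (Real.sqrt σ)]
    congr 1
    · ring
    · rw [mul_one]
      ext
      exact Real.sq_sqrt hσ0
  have hT : MeasurePreserving (fun (a : Fin d → ℝ) i => Real.sqrt σ * a i)
      (Measure.pi fun _ : Fin d => gaussianReal 0 1)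
      (Measure.pi fun _ : Fin d => gaussianReal 0 σ') :=
    measurePreserving_pi _ _ fun i => ⟨(measurable_id.const_mul _), hmap⟩
  have hset : {x : Fin d → ℝ | Real.sqrt (∑ i, (Real.sqrt σ * x i + z i) ^ 2) ≤ R}
      = (fun (a : Fin d → ℝ) i => Real.sqrt σ * a i) ⁻¹' S := rfl
  have hRHS : (Measure.pi fun _ : Fin d => gaussianReal 0 1)
      {x : Fin d → ℝ | Real.sqrt (∑ i, (Real.sqrt σ * x i + z i) ^ 2) ≤ R}
      = (Measure.pi fun _ : Fin d => gaussianReal 0 σ') S := by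
    rw [hset, ← hT.map_eq, Measure.map_apply hT.measurable hSm]
  rw [hRHS]
  -- compare the two product measures
  have hof : ENNReal.ofReal (Real.sqrt 2) ≠ ⊤ := ENNReal.ofReal_ne_top
  have hle : (Measure.pi fun _ : Fin d => gaussianReal 0 1)
      ≤ Measure.pi fun _ : Fin d => (ENNReal.ofReal (Real.sqrt 2)) • gaussianReal 0 σ' :=
    aux_pi_mono fun i => aux_gauss_le hσ'1 hσ'2
  have hsmul : (Measure.pi fun _ : Fin d => (ENNReal.ofReal (Real.sqrt 2)) • gaussianReal 0 σ')
      = ((ENNReal.ofReal (Real.sqrt 2)) ^ d) • Measure.pi fun _ : Fin d => gaussianReal 0 σ' := by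
    rw [aux_pi_smul _ hof, Fintype.card_fin]
  have hconst : (ENNReal.ofReal (Real.sqrt 2)) ^ d = ENNReal.ofReal ((2:ℝ) ^ ((d:ℝ)/2)) := by
    rw [← ENNReal.ofReal_pow (Real.sqrt_nonneg 2)]
    congr 1
    rw [Real.sqrt_eq_rpow, ← Real.rpow_natCast ((2:ℝ) ^ ((1:ℝ)/2)) d,
      ← Real.rpow_mul (by norm_num)]
    norm_num
    ring_nf
  calc (Measure.pi fun _ : Fin d => gaussianReal 0 1) S
      ≤ (Measure.pi fun _ : Fin d => (ENNReal.ofReal (Real.sqrt 2)) • gaussianReal 0 σ') S :=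
        Measure.le_iff'.1 hle S
    _ = ((ENNReal.ofReal (Real.sqrt 2)) ^ d) *
          (Measure.pi fun _ : Fin d => gaussianReal 0 σ') S := by
        rw [hsmul, Measure.smul_apply, smul_eq_mul]
    _ = ENNReal.ofReal ((2:ℝ) ^ ((d:ℝ)/2)) *
          (Measure.pi fun _ : Fin d => gaussianReal 0 σ') S := by rw [hconst]
end

section
/- Let V(x) = -1_{[0,r]}(‖x‖) and suppose the Schrödinger operator H = -Δ/2 + δV on L²(ℝ^d) has a strictly positive normalized ground state ξ₀ with ground state energy E₀ < 0. Then there exists c > 0 such that for all sufficiently large T, E[exp(-δ ∫₀^T V(x_s) ds)] ≥ e^{cT}, where E is expectation with respect to Wiener measure started at 0. Moreover c can be taken equal to |E₀|/2. -/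
open MeasureTheory ProbabilityTheory Filter intervalIntegral
open scoped NNReal ENNReal

/-- Euclidean norm on `Fin d → ℝ`. -/
noncomputable def eucNorm {d : ℕ} (v : Fin d → ℝ) : ℝ :=
  Real.sqrt (∑ i, v i ^ 2)

/-- A standard `d`-dimensional Brownian motion under the probability measure `P`. -/
structure IsStdBrownianMotion (d : ℕ) {Ω : Type*} [MeasurableSpace Ω]
    (P : Measure Ω) (B : ℝ → Ω → Fin d → ℝ) : Prop where
  meas : ∀ t : ℝ, Measurable (B t)
  init : ∀ᵐ ω ∂P, B 0 ω = 0
  cont : ∀ᵐ ω ∂P, Continuous fun t => B t ω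
  incr_law : ∀ (i : Fin d) (s t : ℝ), 0 ≤ s → s ≤ t →
    Measure.map (fun ω => B t ω i - B s ω i) P = gaussianReal 0 ((t - s).toNNReal)
  incr_indep : ∀ (s₁ t₁ s₂ t₂ : ℝ) (i j : Fin d),
    0 ≤ s₁ → s₁ ≤ t₁ → t₁ ≤ s₂ → s₂ ≤ t₂ →
    IndepFun (fun ω => B t₁ ω i - B s₁ ω i) (fun ω => B t₂ ω j - B s₂ ω j) P
  coord_indep : ∀ s t : ℝ, 0 ≤ s → s ≤ t →
    iIndepFun (m := fun _ : Fin d => inferInstance) (fun (i : Fin d) ω => B t ω i - B s ω i) P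

/-- The potential well `V = -1_{[0,r]}(‖x‖)`. -/
noncomputable def wellPotential {d : ℕ} (r : ℝ) (u : Fin d → ℝ) : ℝ :=
  if eucNorm u ≤ r then -1 else 0

lemma wp_bounds {d : ℕ} (r : ℝ) (u : Fin d → ℝ) :
    -1 ≤ wellPotential r u ∧ wellPotential r u ≤ 0 := by
  unfold wellPotential; split <;> norm_num

lemma intV_bounds {d : ℕ} (r : ℝ) (g : ℝ → Fin d → ℝ) {T : ℝ} (hT : 0 ≤ T) :
    -T ≤ (∫ s in (0:ℝ)..T, wellPotential r (g s)) ∧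
      (∫ s in (0:ℝ)..T, wellPotential r (g s)) ≤ 0 := by
  by_cases h : IntervalIntegrable (fun s => wellPotential r (g s)) volume 0 T
  · constructor
    · have h1 := intervalIntegral.integral_mono_on hT
        (_root_.intervalIntegrable_const (c := (-1:ℝ))) h
        (fun x _ => (wp_bounds r (g x)).1)
      simpa using h1
    · have h2 := intervalIntegral.integral_mono_on hT h
        (_root_.intervalIntegrable_const (c := (0:ℝ)))
        (fun x _ => (wp_bounds r (g x)).2)
      simpa using h2
  · rw [intervalIntegral.integral_undef h]
    constructor <;> linarith

lemma gauss_le_volume {v : ℝ≥0} (hv : 1 ≤ v) : gaussianReal 0 v ≤ (volume : Measure ℝ) := by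
  have hv0 : v ≠ 0 := by
    intro h; rw [h] at hv; exact (by norm_num : ¬ (1:ℝ≥0) ≤ 0) hv
  rw [gaussianReal_of_var_ne_zero _ hv0]
  refine Measure.le_iff.mpr fun s hs => ?_
  rw [withDensity_apply _ hs]
  calc ∫⁻ x in s, gaussianPDF 0 v x ≤ ∫⁻ _x in s, 1 := by
        refine lintegral_mono fun x => ?_
        rw [gaussianPDF]
        refine ENNReal.ofReal_le_one.mpr ?_
        rw [gaussianPDFReal]
        have hv1 : (1:ℝ) ≤ (v:ℝ) := by exact_mod_cast hv
        have hpi := Real.pi_gt_three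
        have hsq : (1:ℝ) ≤ Real.sqrt (2 * Real.pi * v) :=
          Real.one_le_sqrt.mpr (by nlinarith)
        refine mul_le_one₀ ?_ (Real.exp_nonneg _) ?_
        · exact inv_le_one_of_one_le₀ hsq
        · rw [Real.exp_le_one_iff]
          apply div_nonpos_of_nonpos_of_nonneg
          · simpa using sq_nonneg (x - 0)
          · positivity
    _ = volume s := by simp

lemma pi_mono'' {ι : Type*} [Fintype ι] {α : ι → Type*} [∀ i, MeasurableSpace (α i)]
    {μ ν : ∀ i, Measure (α i)} [∀ i, SigmaFinite (μ i)] [∀ i, SigmaFinite (ν i)]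
    (h : ∀ i, μ i ≤ ν i) : Measure.pi μ ≤ Measure.pi ν := by
  have hout : (OuterMeasure.pi fun i => (μ i).toOuterMeasure)
      ≤ OuterMeasure.pi fun i => (ν i).toOuterMeasure := by
    rw [OuterMeasure.le_pi]
    intro s _
    refine (OuterMeasure.pi_pi_le _ s).trans ?_
    exact Finset.prod_le_prod' fun i _ => Measure.le_iff'.mp (h i) (s i)
  refine Measure.le_iff.mpr fun s hs => ?_
  rw [Measure.pi_def, Measure.pi_def, toMeasure_apply _ _ hs, toMeasure_apply _ _ hs]
  exact hout _

lemma bm_law {d : ℕ} {Ω : Type*} [MeasurableSpace Ω] (P : Measure Ω) [IsProbabilityMeasure P]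
    (B : ℝ → Ω → Fin d → ℝ) (hB : IsStdBrownianMotion d P B) {T : ℝ} (hT : 0 ≤ T) :
    Measure.map (B T) P = Measure.pi (fun _ : Fin d => gaussianReal 0 T.toNNReal) := by
  have hmeasi : ∀ i : Fin d, Measurable fun ω => B T ω i - B 0 ω i := fun i =>
    ((measurable_pi_apply i).comp (hB.meas T)).sub ((measurable_pi_apply i).comp (hB.meas 0))
  have htuple : Measurable fun ω => fun i : Fin d => B T ω i - B 0 ω i :=
    measurable_pi_lambda _ hmeasi
  have h0 : (fun ω => fun i : Fin d => B T ω i - B 0 ω i) =ᵐ[P] B T := by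
    filter_upwards [hB.init] with ω hω
    funext i; rw [hω]; simp
  rw [← Measure.map_congr h0]
  refine (Measure.pi_eq fun s hs => ?_).symm
  rw [Measure.map_apply htuple (MeasurableSet.univ_pi hs)]
  have hpre : (fun ω => fun i : Fin d => B T ω i - B 0 ω i) ⁻¹' (Set.pi Set.univ s)
      = ⋂ i, (fun ω => B T ω i - B 0 ω i) ⁻¹' (s i) := by
    ext ω; simp [Set.mem_pi]
  rw [hpre, (hB.coord_indep 0 T le_rfl hT).meas_iInter (fun i => ⟨s i, hs i, rfl⟩)]
  refine Finset.prod_congr rfl fun i _ => ?_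
  rw [← Measure.map_apply (hmeasi i) (hs i), hB.incr_law i 0 T le_rfl hT, sub_zero]

/-- exponential growth of the Feynman–Kac expectation.  Suppose
`H = -Δ/2 + δV` with `V = -1_{[0,r]}` has a strictly positive normalized ground state
`ξ₀` with ground state energy `E₀ < 0`, expressed through the Feynman–Kac eigenvalue
relation `E^z[e^{-δ∫₀^t V(x_s)ds} ξ₀(x_t)] = e^{-tE₀} ξ₀(z)`.  Then there exists
`c > 0` with `E[e^{-δ∫₀^T V(x_s)ds}] ≥ e^{cT}` for all large `T`; moreover one can
take `c = |E₀|/2`. -/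
theorem feynman_kac_exponential_growth (d : ℕ) (hd : 0 < d) {Ω : Type*}
    [MeasurableSpace Ω] (P : Measure Ω) [IsProbabilityMeasure P]
    (B : ℝ → Ω → Fin d → ℝ) (hB : IsStdBrownianMotion d P B)
    (δ r : ℝ) (hδ : 0 < δ) (hr : 0 < r)
    (ξ₀ : (Fin d → ℝ) → ℝ) (hpos : ∀ u, 0 < ξ₀ u)
    (hnorm : (∫ u : Fin d → ℝ, ξ₀ u ^ 2) = 1)
    (E₀ : ℝ) (hE₀ : E₀ < 0)
    (heigen : ∀ t : ℝ, 0 ≤ t → ∀ z : Fin d → ℝ,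
      ∫ ω, Real.exp (-δ * ∫ s in (0 : ℝ)..t, wellPotential r fun j => z j + B s ω j) *
          ξ₀ (fun j => z j + B t ω j) ∂P
        = Real.exp (-t * E₀) * ξ₀ z) :
    (∃ c : ℝ, 0 < c ∧ ∀ᶠ T in atTop,
      Real.exp (c * T)
        ≤ ∫ ω, Real.exp (-δ * ∫ s in (0 : ℝ)..T, wellPotential r (B s ω)) ∂P) ∧
    ∀ᶠ T in atTop,
      Real.exp (|E₀| / 2 * T)
        ≤ ∫ ω, Real.exp (-δ * ∫ s in (0 : ℝ)..T, wellPotential r (B s ω)) ∂P := by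
  have hxi2_int : Integrable (fun u : Fin d → ℝ => ξ₀ u ^ 2) := by
    by_contra h
    rw [integral_undef h] at hnorm
    exact zero_ne_one hnorm
  have hxi_aesm : AEStronglyMeasurable ξ₀ (volume : Measure (Fin d → ℝ)) := by
    have hxi_eq : ξ₀ = fun u => Real.sqrt (ξ₀ u ^ 2) := by
      funext u; rw [Real.sqrt_sq (hpos u).le]
    rw [hxi_eq]
    exact Real.continuous_sqrt.comp_aestronglyMeasurable hxi2_int.aestronglyMeasurable
  have hle : ∀ T : ℝ, 1 ≤ T → Measure.map (B T) P ≤ (volume : Measure (Fin d → ℝ)) := by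
    intro T hT1
    rw [bm_law P B hB (by linarith : (0:ℝ) ≤ T), MeasureTheory.volume_pi]
    refine pi_mono'' fun _ => gauss_le_volume ?_
    rw [← Real.toNNReal_one]
    exact Real.toNNReal_mono hT1
  have hac : ∀ T : ℝ, 1 ≤ T → Measure.map (B T) P ≪ (volume : Measure (Fin d → ℝ)) :=
    fun T hT => (hle T hT).absolutelyContinuous
  have hxiB_aesm : ∀ T : ℝ, 1 ≤ T → AEStronglyMeasurable (fun ω => ξ₀ (B T ω)) P := by
    intro T hT
    exact (hxi_aesm.mono_ac (hac T hT)).comp_aemeasurable (hB.meas T).aemeasurable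
  set M : ℝ := Real.exp (E₀ + δ) with hMdef
  have hMpos : 0 < M := Real.exp_pos _
  have hM : ∀ z, ξ₀ z ≤ M := by
    intro z
    have hle1 := hle 1 le_rfl
    have hac1 := hac 1 le_rfl
    have hχ2_int_vol : Integrable (fun u : Fin d → ℝ => ξ₀ (z + u) ^ 2) volume :=
      ((measurePreserving_add_left (volume : Measure (Fin d → ℝ)) z).integrable_comp
        hxi2_int.aestronglyMeasurable).mpr hxi2_int
    have hχ_aesm_vol : AEStronglyMeasurable (fun u : Fin d → ℝ => ξ₀ (z + u)) volume :=
      hxi_aesm.comp_quasiMeasurePreserving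
        (measurePreserving_add_left (volume : Measure (Fin d → ℝ)) z).quasiMeasurePreserving
    have hχ2_eq : (∫ u : Fin d → ℝ, ξ₀ (z + u) ^ 2) = 1 :=
      (integral_add_left_eq_self (fun u : Fin d → ℝ => ξ₀ u ^ 2) z).trans hnorm
    have hχ2_aesm_map : AEStronglyMeasurable (fun u : Fin d → ℝ => ξ₀ (z + u) ^ 2)
        (Measure.map (B 1) P) := hχ2_int_vol.aestronglyMeasurable.mono_ac hac1
    have hχ_aesm_map : AEStronglyMeasurable (fun u : Fin d → ℝ => ξ₀ (z + u))
        (Measure.map (B 1) P) := hχ_aesm_vol.mono_ac hac1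
    have hχB_aesm : AEStronglyMeasurable (fun ω => ξ₀ (z + B 1 ω)) P :=
      hχ_aesm_map.comp_aemeasurable (hB.meas 1).aemeasurable
    have hχB2_int : Integrable (fun ω => ξ₀ (z + B 1 ω) ^ 2) P :=
      (integrable_map_measure hχ2_aesm_map (hB.meas 1).aemeasurable).mp
        (hχ2_int_vol.mono_measure hle1)
    have hχB2_le : (∫ ω, ξ₀ (z + B 1 ω) ^ 2 ∂P) ≤ 1 := by
      have e1 : (∫ ω, ξ₀ (z + B 1 ω) ^ 2 ∂P)
          = ∫ u, ξ₀ (z + u) ^ 2 ∂(Measure.map (B 1) P) :=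
        (integral_map (hB.meas 1).aemeasurable hχ2_aesm_map).symm
      rw [e1]
      exact (integral_mono_measure hle1 (ae_of_all _ fun u => sq_nonneg _)
        hχ2_int_vol).trans_eq hχ2_eq
    have hχB_int : Integrable (fun ω => ξ₀ (z + B 1 ω)) P := by
      refine Integrable.mono' (((integrable_const (1:ℝ)).add hχB2_int).div_const 2)
        hχB_aesm (ae_of_all _ fun ω => ?_)
      rw [Real.norm_eq_abs, abs_of_pos (hpos _)]
      simp only [Pi.add_apply]
      nlinarith [sq_nonneg (ξ₀ (z + B 1 ω) - 1)]
    have hχB_le : (∫ ω, ξ₀ (z + B 1 ω) ∂P) ≤ 1 := by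
      have h2 : (∫ ω, ξ₀ (z + B 1 ω) ∂P) ≤ ∫ ω, (1 + ξ₀ (z + B 1 ω) ^ 2) / 2 ∂P := by
        refine integral_mono_of_nonneg (ae_of_all _ fun ω => (hpos _).le)
          (((integrable_const (1:ℝ)).add hχB2_int).div_const 2) (ae_of_all _ fun ω => ?_)
        nlinarith [sq_nonneg (ξ₀ (z + B 1 ω) - 1)]
      have h3 : (∫ ω, (1 + ξ₀ (z + B 1 ω) ^ 2) / 2 ∂P)
          = (1 + ∫ ω, ξ₀ (z + B 1 ω) ^ 2 ∂P) / 2 := by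
        rw [MeasureTheory.integral_div, integral_add (integrable_const 1) hχB2_int, MeasureTheory.integral_const]
        simp
      rw [h3] at h2
      linarith
    have hkey := heigen 1 zero_le_one z
    have hub : ∀ ω, Real.exp (-δ * ∫ s in (0:ℝ)..1, wellPotential r fun j => z j + B s ω j) *
        ξ₀ (fun j => z j + B 1 ω j) ≤ Real.exp δ * ξ₀ (z + B 1 ω) := by
      intro ω
      have hIV := (intV_bounds r (fun s => fun j => z j + B s ω j) zero_le_one).1
      have harg : -δ * (∫ s in (0:ℝ)..1, wellPotential r fun j => z j + B s ω j) ≤ δ := by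
        nlinarith
      have hξeq : ξ₀ (fun j => z j + B 1 ω j) = ξ₀ (z + B 1 ω) := rfl
      rw [hξeq]
      exact mul_le_mul_of_nonneg_right (Real.exp_le_exp.mpr harg) (hpos _).le
    have hint_le : Real.exp (-(1:ℝ) * E₀) * ξ₀ z ≤ Real.exp δ * 1 := by
      rw [← hkey]
      refine le_trans (integral_mono_of_nonneg (ae_of_all _ fun ω => mul_nonneg (Real.exp_nonneg _) (hpos _).le)
        (hχB_int.const_mul _) (ae_of_all _ hub)) ?_
      rw [MeasureTheory.integral_const_mul]
      exact mul_le_mul_of_nonneg_left hχB_le (Real.exp_nonneg _)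
    calc ξ₀ z = Real.exp E₀ * (Real.exp (-(1:ℝ) * E₀) * ξ₀ z) := by
          rw [neg_one_mul, ← mul_assoc, ← Real.exp_add]
          simp
      _ ≤ Real.exp E₀ * (Real.exp δ * 1) :=
          mul_le_mul_of_nonneg_left hint_le (Real.exp_nonneg _)
      _ = M := by rw [hMdef, Real.exp_add]; ring
  have habs : (0:ℝ) < |E₀| := abs_pos.mpr hE₀.ne
  have hratio : (0:ℝ) < ξ₀ 0 / M := div_pos (hpos 0) hMpos
  have htend : Tendsto (fun T : ℝ => Real.exp (-(|E₀| / 2) * T)) atTop (nhds 0) := by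
    refine Real.tendsto_exp_atBot.comp ?_
    exact (tendsto_id (α := ℝ)).const_mul_atTop_of_neg (by linarith)
  have hev : ∀ᶠ T in atTop, Real.exp (-(|E₀| / 2) * T) < ξ₀ 0 / M :=
    htend.eventually_lt_const hratio
  have main : ∀ᶠ T in atTop,
      Real.exp (|E₀| / 2 * T)
        ≤ ∫ ω, Real.exp (-δ * ∫ s in (0 : ℝ)..T, wellPotential r (B s ω)) ∂P := by
    filter_upwards [eventually_ge_atTop (1:ℝ), hev] with T hT1 hT2
    have hT0 : (0:ℝ) ≤ T := by linarith
    have hkey := heigen T hT0 0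
    simp only [Pi.zero_apply, zero_add] at hkey
    set F : Ω → ℝ := fun ω => Real.exp (-δ * ∫ s in (0:ℝ)..T, wellPotential r (B s ω)) with hF
    have hGint : Integrable (fun ω => F ω * ξ₀ (B T ω)) P := by
      by_contra hcon
      rw [integral_undef hcon] at hkey
      exact absurd hkey.symm (ne_of_gt (mul_pos (Real.exp_pos _) (hpos 0)))
    have hFaesm : AEStronglyMeasurable F P := by
      have hFe : F = fun ω => (F ω * ξ₀ (B T ω)) * (ξ₀ (B T ω))⁻¹ := by
        funext ω; rw [mul_assoc, mul_inv_cancel₀ (hpos _).ne', mul_one]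
      rw [hFe]
      exact (hGint.aestronglyMeasurable.aemeasurable.mul
        (hxiB_aesm T hT1).aemeasurable.inv).aestronglyMeasurable
    have hFle : ∀ ω, F ω ≤ Real.exp (δ * T) := by
      intro ω
      have hIV := (intV_bounds r (fun s => B s ω) hT0).1
      exact Real.exp_le_exp.mpr (by nlinarith)
    have hFint : Integrable F P := by
      refine Integrable.mono' (integrable_const (Real.exp (δ * T))) hFaesm
        (ae_of_all _ fun ω => ?_)
      rw [Real.norm_eq_abs, abs_of_pos (Real.exp_pos _)]
      exact hFle ω
    have hGleMF : ∀ ω, F ω * ξ₀ (B T ω) ≤ M * F ω := fun ω => by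
      calc F ω * ξ₀ (B T ω) ≤ F ω * M :=
            mul_le_mul_of_nonneg_left (hM _) (Real.exp_pos _).le
        _ = M * F ω := mul_comm _ _
    have h3 : Real.exp (-T * E₀) * ξ₀ 0 ≤ M * ∫ ω, F ω ∂P := by
      rw [← hkey, ← MeasureTheory.integral_const_mul]
      exact integral_mono hGint (hFint.const_mul M) hGleMF
    have h2 : Real.exp (-(|E₀| / 2) * T) * M ≤ ξ₀ 0 := ((lt_div_iff₀ hMpos).mp hT2).le
    have h1 : Real.exp (|E₀| / 2 * T) * M ≤ Real.exp (-T * E₀) * ξ₀ 0 := by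
      have hexp : Real.exp (|E₀| / 2 * T)
          = Real.exp (-T * E₀) * Real.exp (-(|E₀| / 2) * T) := by
        rw [← Real.exp_add]
        congr 1
        rw [abs_of_neg hE₀]; ring
      rw [hexp, mul_assoc]
      exact mul_le_mul_of_nonneg_left h2 (Real.exp_nonneg _)
    have h4 : M * Real.exp (|E₀| / 2 * T) ≤ M * ∫ ω, F ω ∂P := by
      rw [mul_comm]
      exact h1.trans h3
    exact le_of_mul_le_mul_left h4 hMpos
  exact ⟨⟨|E₀| / 2, by linarith, main⟩, main⟩
end
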